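/- Let U be an infinite set with card U = τ. Then there exists an ultrafilter 𝒰 on U such that for every valuation ring V, any system of polynomial equations (g_i((X_j)_{j∈J}))_{i∈I} with card I ≤ τ, in variables (X_j)_{j∈J}, with coefficients in the ultrapower Ṽ = Π_𝒰 V, has a solution in Ṽ if and only if all of its finite subsystems have solutions in Ṽ. -/

import Mathlib

/-!
Common definitions for formalizing "Immediate extensions of valuation rings
and ultrapowers" (D. Popescu).

In a valuation ring (or any commutative ring, via divisibility) we encode the
comparison of values: `val a < val b` iff `a ∣ b` and `¬ b ∣ a`, and
`val a = val b` iff `a ∣ b ∧ b ∣ a`.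
-/

universe u v

open Filter

/-- `val a < val b`, expressed via divisibility. -/
def ValLT {R : Type*} [CommRing R] (a b : R) : Prop := a ∣ b ∧ ¬ b ∣ a

/-- `val a = val b`, expressed via divisibility. -/
def ValEq {R : Type*} [CommRing R] (a b : R) : Prop := a ∣ b ∧ b ∣ a

/-- A sequence indexed by the ordinals `< lam` is pseudo convergent if
`val (v i - v i') < val (v i' - v i'')` for all `i < i' < i''`. -/
def IsPseudoConvergent {R : Type*} [CommRing R] {lam : Ordinal.{v}}
    (seq : Set.Iio lam → R) : Prop :=
  ∀ i i' i'' : Set.Iio lam, i < i' → i' < i'' →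
    ValLT (seq i - seq i') (seq i' - seq i'')

/-- `z` is a pseudo limit of the sequence `seq` if
`val (z - v i) < val (z - v i')` for all `i < i'`. -/
def IsPseudoLimit {R : Type*} [CommRing R] {lam : Ordinal.{v}}
    (seq : Set.Iio lam → R) (z : R) : Prop :=
  ∀ i i' : Set.Iio lam, i < i' → ValLT (z - seq i) (z - seq i')

/-- A pseudo convergent sequence is algebraic if some polynomial `f`
satisfies `val (f (v i)) < val (f (v i'))` for all large enough `i < i'`. -/
def IsAlgebraicSeq {R : Type*} [CommRing R] {lam : Ordinal.{v}}
    (seq : Set.Iio lam → R) : Prop :=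
  ∃ f : Polynomial R, ∃ i₀ : Set.Iio lam, ∀ i i' : Set.Iio lam,
    i₀ ≤ i → i < i' →
      ValLT (Polynomial.eval (seq i) f) (Polynomial.eval (seq i') f)

/-- A pseudo convergent sequence is transcendental if every polynomial `f`
satisfies `val (f (v i)) = val (f (v i'))` for all large enough `i < i'`. -/
def IsTranscendentalSeq {R : Type*} [CommRing R] {lam : Ordinal.{v}}
    (seq : Set.Iio lam → R) : Prop :=
  ∀ f : Polynomial R, ∃ i₀ : Set.Iio lam, ∀ i i' : Set.Iio lam,
    i₀ ≤ i → i < i' →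
      ValEq (Polynomial.eval (seq i) f) (Polynomial.eval (seq i') f)

/-- A sequence is fundamental if for every `γ` in the value group (the positive
part being cofinal, `γ` is represented by a nonzero element `z` of the ring)
there exist `i < i'` with `val (v i - v i') > val z`. -/
def IsFundamentalSeq {R : Type*} [CommRing R] {lam : Ordinal.{v}}
    (seq : Set.Iio lam → R) : Prop :=
  ∀ z : R, z ≠ 0 → ∃ i i' : Set.Iio lam, i < i' ∧ ValLT z (seq i - seq i')

/-- An extension of valuation rings `f : V →+* V'` is immediate if it is
injective and local and induces isomorphisms on value groups (equivalently,
as `f` is local and injective, the value group map is onto) and on residue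
fields (equivalently, the residue map is onto). -/
structure IsImmediate {V V' : Type*} [CommRing V] [CommRing V'] (f : V →+* V') : Prop where
  injective : Function.Injective f
  isLocal : ∀ a : V, IsUnit (f a) → IsUnit a
  value_surj : ∀ x : V', ∃ a : V, ValEq (f a) x
  residue_surj : ∀ x : V', ∃ a : V, ¬ IsUnit (x - f a)

/-- A valuation ring is complete (with respect to the valuation topology) iff
every fundamental pseudo convergent sequence has a (pseudo) limit. -/
def IsCompleteValRing (R : Type v) [CommRing R] : Prop :=
  ∀ lam : Ordinal.{v}, Order.IsSuccLimit lam → ∀ seq : Set.Iio lam → R,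
    IsPseudoConvergent seq → IsFundamentalSeq seq → ∃ z : R, IsPseudoLimit seq z

/-- `h : V →+* Vh` presents `Vh` as the completion of `V` (with respect to the
valuation topology): it is an immediate extension, `Vh` is complete, and `V`
is dense in `Vh`. -/
structure IsValuationCompletion {V : Type*} {Vh : Type v} [CommRing V] [CommRing Vh]
    (h : V →+* Vh) : Prop where
  immediate : IsImmediate h
  complete : IsCompleteValRing Vh
  dense : ∀ x : Vh, ∀ z : V, z ≠ 0 → ∃ a : V, ValLT (h z) (x - h a)

/-- A field extension `g : K →+* L` is separable iff `M ⊗[K] L` is reduced for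
every field extension `M` of `K` (MacLane's criterion). -/
def IsSeparableFieldHom {K L : Type u} [Field K] [Field L] (g : K →+* L) : Prop :=
  ∀ (M : Type u) [Field M] (φ : K →+* M),
    letI : Algebra K L := g.toAlgebra
    letI : Algebra K M := φ.toAlgebra
    IsReduced (TensorProduct K M L)

/-- An injective extension of domains is separable if the induced extension of
fraction fields is separable. -/
def IsSeparableDomainExt {A B : Type u} [CommRing A] [IsDomain A] [CommRing B] [IsDomain B]
    (f : A →+* B) : Prop :=
  ∃ g : FractionRing A →+* FractionRing B,
    (∀ a : A, g (algebraMap A (FractionRing A) a) = algebraMap B (FractionRing B) (f a)) ∧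
    IsSeparableFieldHom g

/-- The ultrapower `Ṽ = Π_𝒰 V` of `V` with respect to the ultrafilter `𝒰` on `U`. -/
abbrev Ultrapower (U : Type u) (𝒰 : Ultrafilter U) (V : Type u) : Type u :=
  Filter.Germ (𝒰 : Filter U) V

/-- The canonical (diagonal) embedding `V → Ṽ`. -/
noncomputable def germConstHom (U : Type u) (𝒰 : Ultrafilter U) (V : Type u) [CommRing V] :
    V →+* Ultrapower U 𝒰 V :=
  (Filter.Germ.coeRingHom (𝒰 : Filter U)).comp (Pi.constRingHom U V)

/-- The ideal `q = ⋂_{z ∈ V, z ≠ 0} z Ṽ` of the ultrapower. -/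
noncomputable def sepIdeal (U : Type u) (𝒰 : Ultrafilter U) (V : Type u) [CommRing V] :
    Ideal (Ultrapower U 𝒰 V) :=
  ⨅ z : {z : V // z ≠ 0}, Ideal.span {germConstHom U 𝒰 V z.1}

/-- The separation `V̄ = Ṽ / q` of the ultrapower. -/
abbrev SepUltrapower (U : Type u) (𝒰 : Ultrafilter U) (V : Type u) [CommRing V] : Type u :=
  Ultrapower U 𝒰 V ⧸ sepIdeal U 𝒰 V

/-- The canonical map `V → V̄`. -/
noncomputable def barConstHom (U : Type u) (𝒰 : Ultrafilter U) (V : Type u) [CommRing V] :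
    V →+* SepUltrapower U 𝒰 V :=
  (Ideal.Quotient.mk (sepIdeal U 𝒰 V)).comp (germConstHom U 𝒰 V)

/-- `𝒰` is such that any system of polynomial equations of cardinality
`≤ card U` with coefficients in the ultrapower `Ṽ` has a solution in `Ṽ`
whenever every finite subsystem has one. -/
def SaturatedUltrafilter (U : Type u) (𝒰 : Ultrafilter U) (V : Type u) [CommRing V] : Prop :=
  ∀ (I J : Type u) (g : I → MvPolynomial J (Ultrapower U 𝒰 V)),
    Cardinal.mk I ≤ Cardinal.mk U →
    (∀ s : Finset I, ∃ x : J → Ultrapower U 𝒰 V, ∀ i ∈ s, MvPolynomial.eval x (g i) = 0) →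
    ∃ x : J → Ultrapower U 𝒰 V, ∀ i : I, MvPolynomial.eval x (g i) = 0

/-- A factorization of `w : B →+* V'` through a smooth `V`-algebra `C`. -/
structure SmoothFactorization (V B V' : Type u) [CommRing V] [CommRing B] [Algebra V B]
    [CommRing V'] (f : V →+* V') (w : B →+* V') : Type (u + 1) where
  C : Type u
  [instCommRing : CommRing C]
  [instAlgebra : Algebra V C]
  smooth : Algebra.Smooth V C
  p : B →+* C
  q : C →+* V'
  hp : p.comp (algebraMap V B) = algebraMap V C
  hq : q.comp (algebraMap V C) = f
  hqp : q.comp p = w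

/-- `V'` is a filtered direct limit of smooth `V`-algebras: every `V`-morphism
from a finitely presented `V`-algebra to `V'` factors through a smooth
`V`-algebra (Lazard-style characterization of filtered colimits). -/
def IsFilteredColimitOfSmooth {V V' : Type u} [CommRing V] [CommRing V'] (f : V →+* V') : Prop :=
  ∀ (B : Type u) [CommRing B] [Algebra V B], Algebra.FinitePresentation V B →
    ∀ w : B →+* V', w.comp (algebraMap V B) = f →
      Nonempty (SmoothFactorization V B V' f w)


/-! ### Auxiliary development: existence of good ultrafilters (Keisler–Kunen)
and a Łoś-type lemma for polynomial evaluation over ultrapowers. -/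

section GoodUFSection
set_option linter.unusedSectionVars false
open Cardinal Set Ordinal

namespace GoodUF

variable {U : Type u}

/-- An "independent family with a size function". -/
def IndepFam (σ : U → ℕ) (F : Set U → U → Finset U) : Prop :=
  ∀ (m : ℕ) (C : Finset (Set U)) (t : Set U → Finset U),
    ∃ u, m ≤ σ u ∧ ∀ A ∈ C, F A u = t A

theorem exists_indepFam (U : Type u) [Infinite U] :
    ∃ (σ : U → ℕ) (F : Set U → U → Finset U), IndepFam σ F := by
  classical
  set D := Finset U × Finset (Finset U × Finset U) with hD
  have hcard : (#U) = #D := by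
    simp [hD, Cardinal.mk_prod, Cardinal.mk_finset_of_infinite,
      Cardinal.mul_eq_self (Cardinal.aleph0_le_mk U)]
  obtain ⟨e⟩ : Nonempty (U ≃ D) := Cardinal.eq.1 hcard
  refine ⟨fun u => (e u).1.card,
    fun A u => if h : ∃ b, ((e u).1.filter (· ∈ A), b) ∈ (e u).2 then h.choose else ∅, ?_⟩
  intro m C t
  have hsep : ∀ p : Set U × Set U, p.1 ≠ p.2 → ((p.1 \ p.2) ∪ (p.2 \ p.1)).Nonempty := by
    intro p hp
    rw [← Set.symmDiff_def]
    exact Set.symmDiff_nonempty.2 hp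
  set g : Set U × Set U → U := fun p =>
    if h : p.1 ≠ p.2 then (hsep p h).choose else Classical.arbitrary U with hg
  set P : Finset (Set U × Set U) := (C ×ˢ C).filter (fun p => p.1 ≠ p.2) with hP
  set s₀ : Finset U := P.image g with hs₀
  obtain ⟨s, hs₀s, hscard⟩ := Infinite.exists_superset_card_eq s₀ (max m s₀.card)
    (le_max_right _ _)
  have hfilt : ∀ A ∈ C, ∀ B ∈ C, A ≠ B →
      s.filter (· ∈ A) ≠ s.filter (· ∈ B) := by
    intro A hA B hB hAB
    have hmem : (A, B) ∈ P := by simp [hP, hA, hB, hAB]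
    have hxprop := (hsep (A, B) hAB).choose_spec
    set x := (hsep (A, B) hAB).choose with hx
    have hgx : g (A, B) = x := by
      rw [hg]; simp only [dif_pos (show (A,B).1 ≠ (A,B).2 from hAB)]; rfl
    have hxs : x ∈ s := by
      apply hs₀s
      rw [hs₀]
      exact Finset.mem_image.2 ⟨(A, B), hmem, hgx⟩
    intro hEq
    rcases hxprop with ⟨h1, h2⟩ | ⟨h1, h2⟩
    · have : x ∈ s.filter (· ∈ A) := Finset.mem_filter.2 ⟨hxs, h1⟩
      rw [hEq] at this
      exact h2 (Finset.mem_filter.1 this).2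
    · have : x ∈ s.filter (· ∈ B) := Finset.mem_filter.2 ⟨hxs, h1⟩
      rw [← hEq] at this
      exact h2 (Finset.mem_filter.1 this).2
  set Γ : Finset (Finset U × Finset U) := C.image (fun A => (s.filter (· ∈ A), t A)) with hΓ
  refine ⟨e.symm (s, Γ), ?_, ?_⟩
  · simp only [Equiv.apply_symm_apply, hscard]
    exact le_max_left _ _
  · intro A hA
    simp only [Equiv.apply_symm_apply]
    have hex : ∃ b, ((s.filter (· ∈ A), b)) ∈ Γ := ⟨t A, Finset.mem_image.2 ⟨A, hA, rfl⟩⟩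
    rw [dif_pos hex]
    obtain ⟨B, hB, hBeq⟩ := Finset.mem_image.1 hex.choose_spec
    have h1 : s.filter (· ∈ B) = s.filter (· ∈ A) := congrArg Prod.fst hBeq
    have hBA : B = A := by
      by_contra hne
      exact hfilt B hB A hA hne h1
    subst hBA
    exact (congrArg Prod.snd hBeq).symm


variable [DecidableEq U] {σ : U → ℕ} {F : Set U → U → Finset U}

/-- `F`, restricted to indices outside `K`, is independent modulo the family `E`. -/
def Indep (σ : U → ℕ) (F : Set U → U → Finset U) (E K : Set (Set U)) : Prop :=
  ∀ (m : ℕ) (G : Finset (Set U)), ↑G ⊆ E → ∀ (C : Finset (Set U)), (∀ A ∈ C, A ∉ K) →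
    ∀ t : Set U → Finset U, ∃ u, m ≤ σ u ∧ (∀ X ∈ G, u ∈ X) ∧ ∀ A ∈ C, F A u = t A



theorem indep_empty (hF : IndepFam σ F) (K : Set (Set U)) : Indep σ F ∅ K := by
  intro m G hG C _ t
  obtain ⟨u, hu1, hu2⟩ := hF m C t
  refine ⟨u, hu1, fun X hX => absurd (hG hX) (Set.notMem_empty X), hu2⟩

theorem indep_mono_K {E K K' : Set (Set U)} (h : Indep σ F E K) (hKK' : K ⊆ K') :
    Indep σ F E K' :=
  fun m G hG C hC t => h m G hG C (fun A hA => fun hAK => hC A hA (hKK' hAK)) t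

/-- Deciding a set `A` while keeping independence. -/
theorem decide_step {E K : Set (Set U)} (hI : Indep σ F E K) (A : Set U) :
    ∃ E' K', E ⊆ E' ∧ K ⊆ K' ∧ Indep σ F E' K' ∧ (A ∈ E' ∨ Aᶜ ∈ E') ∧
      ∃ W : Finset (Set U), K' ⊆ K ∪ ↑W := by
  classical
  by_cases hyes : Indep σ F (insert A E) K
  · exact ⟨insert A E, K, Set.subset_insert _ _, subset_rfl, hyes,
      Or.inl (Set.mem_insert _ _), ∅, by simp⟩
  · rw [Indep] at hyes
    push_neg at hyes
    obtain ⟨m, G, hG, C, hC, t, hall⟩ := hyes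
    refine ⟨insert Aᶜ E, K ∪ ↑C, Set.subset_insert _ _, Set.subset_union_left, ?_,
      Or.inr (Set.mem_insert _ _), C, subset_rfl⟩
    intro m' G' hG' C' hC' t'
    have hCK : ∀ B ∈ C ∪ C', B ∉ K := by
      intro B hB
      rcases Finset.mem_union.1 hB with hB | hB
      · exact hC B hB
      · exact fun hBK => hC' B hB (Set.mem_union_left _ hBK)
    have hCC' : ∀ B ∈ C', B ∉ C := by
      intro B hB hBC
      exact hC' B hB (Set.mem_union_right _ hBC)
    obtain ⟨u, hu1, hu2, hu3⟩ := hI (max m m') ((G'.erase Aᶜ) ∪ (G.erase A))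
      (by
        intro X hX
        rcases Finset.mem_coe.1 hX |> Finset.mem_union.1 with hX' | hX'
        · have h1 := hG' (Finset.mem_coe.2 (Finset.mem_of_mem_erase hX'))
          rcases Set.mem_insert_iff.1 h1 with h2 | h2
          · exact absurd h2 (Finset.ne_of_mem_erase hX')
          · exact h2
        · have h1 := hG (Finset.mem_coe.2 (Finset.mem_of_mem_erase hX'))
          rcases Set.mem_insert_iff.1 h1 with h2 | h2
          · exact absurd h2 (Finset.ne_of_mem_erase hX')
          · exact h2)
      (C ∪ C') hCK (fun B => if B ∈ C then t B else t' B)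
    have huC : ∀ B ∈ C, F B u = t B := by
      intro B hB
      have := hu3 B (Finset.mem_union_left _ hB)
      rwa [if_pos hB] at this
    have hunotA : u ∉ A := by
      intro huA
      have hmem : ∀ X ∈ G, u ∈ X := by
        intro X hX
        by_cases hXA : X = A
        · rwa [hXA]
        · exact hu2 X (Finset.mem_union_right _ (Finset.mem_erase.2 ⟨hXA, hX⟩))
      obtain ⟨B, hB, hne⟩ := hall u (le_trans (le_max_left _ _) hu1) hmem
      exact hne (huC B hB)
    refine ⟨u, le_trans (le_max_right _ _) hu1, ?_, ?_⟩
    · intro X hX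
      by_cases hXA : X = Aᶜ
      · rwa [hXA]
      · exact hu2 X (Finset.mem_union_left _ (Finset.mem_erase.2 ⟨hXA, hX⟩))
    · intro B hB
      have := hu3 B (Finset.mem_union_right _ hB)
      rwa [if_neg (hCC' B hB)] at this

/-- Adding a multiplicative refinement of a monotone family contained in `E`. -/
theorem handle_step {E K : Set (Set U)} (hI : Indep σ F E K) (hK : K ≠ Set.univ)
    (h : Finset U → Set U) (hmono : ∀ a b : Finset U, a ⊆ b → h b ⊆ h a)
    (hall : ∀ s, h s ∈ E) :
    ∃ E' K', E ⊆ E' ∧ K ⊆ K' ∧ Indep σ F E' K' ∧ (∃ W : Finset (Set U), K' ⊆ K ∪ ↑W) ∧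
      ∃ g : Finset U → Set U, (∀ s, g s ∈ E') ∧ (∀ s, g s ⊆ h s) ∧
        ∀ a b, g a ∩ g b ⊆ g (a ∪ b) := by
  classical
  obtain ⟨Af, hAf⟩ : ∃ Af : Set U, Af ∉ K := by
    by_contra hcon
    push_neg at hcon
    exact hK (Set.eq_univ_of_forall hcon)
  set g : Finset U → Set U := fun s => {u | s ⊆ F Af u ∧ u ∈ h (F Af u)} with hg
  refine ⟨E ∪ Set.range g, insert Af K, Set.subset_union_left, Set.subset_insert _ _,
    ?_, ⟨{Af}, by simp [Set.union_comm]⟩, g, fun s => Set.mem_union_right _ ⟨s, rfl⟩,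
    ?_, ?_⟩
  · -- independence
    intro m G' hG' C hC t
    -- the finite union of all `s` with `g s ∈ G'`
    set f : Set U → Finset U := fun X => if hx : ∃ s, X = g s then hx.choose else ∅ with hf
    set sstar : Finset U := G'.sup f with hsstar
    have hCK : ∀ B ∈ C, B ∉ K := fun B hB hBK =>
      hC B hB (Set.mem_insert_iff.2 (Or.inr hBK))
    have hAfC : Af ∉ C := fun hAfC => hC Af hAfC (Set.mem_insert _ _)
    obtain ⟨u, hu1, hu2, hu3⟩ := hI m ((G'.filter (· ∈ E)) ∪ {h sstar})
      (by
        intro X hX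
        rcases Finset.mem_coe.1 hX |> Finset.mem_union.1 with hX' | hX'
        · exact (Finset.mem_filter.1 hX').2
        · rw [Finset.mem_singleton.1 hX']; exact hall sstar)
      (insert Af C)
      (by
        intro B hB
        rcases Finset.mem_insert.1 hB with hB' | hB'
        · rwa [hB']
        · exact hCK B hB')
      (Function.update t Af sstar)
    have huAf : F Af u = sstar := by
      have := hu3 Af (Finset.mem_insert_self _ _)
      rwa [Function.update_self] at this
    have huh : u ∈ h sstar := hu2 _ (Finset.mem_union_right _ (Finset.mem_singleton_self _))
    refine ⟨u, hu1, ?_, ?_⟩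
    · intro X hX
      by_cases hXE : X ∈ E
      · exact hu2 X (Finset.mem_union_left _ (Finset.mem_filter.2 ⟨hX, hXE⟩))
      · have hXg : ∃ s, X = g s := by
          rcases hG' (Finset.mem_coe.2 hX) with hX' | hX'
          · exact absurd hX' hXE
          · obtain ⟨s, hs⟩ := hX'
            exact ⟨s, hs.symm⟩
        have hXfX : X = g (f X) := by
          rw [hf]; simp only [dif_pos hXg]; exact hXg.choose_spec
        have hfXs : f X ⊆ sstar := Finset.le_sup hX
        rw [hXfX, hg]
        refine ⟨by rw [huAf]; exact hfXs, by rwa [huAf]⟩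
    · intro B hB
      have := hu3 B (Finset.mem_insert.2 (Or.inr hB))
      rwa [Function.update_of_ne (fun hBA : B = Af => hAfC (by rwa [hBA] at hB)) _ _] at this
  · -- g s ⊆ h s
    intro s u hu
    exact hmono s (F Af u) hu.1 hu.2
  · -- multiplicativity
    intro a b u hu
    exact ⟨Finset.union_subset hu.1.1 hu.2.1, hu.1.2⟩


section Rec

variable (U) in
/-- First coordinate of the task type: indexes functions `Finset U → Set U`. -/
abbrev O1 : Type u := (#(Finset U → Set U)).ord.ToType

variable (U) in
/-- Second coordinate: indexes `Finset U`, plus a top element. -/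
abbrev O2 : Type u := WithTop ((#(Finset U)).ord.ToType)

variable (U) in
/-- The linear well-order of tasks. -/
abbrev TT : Type u := O1 U ×ₗ O2 U

variable (U) in
noncomputable def eFn : (Finset U → Set U) ≃ O1 U :=
  Classical.choice (Cardinal.eq.1 (Cardinal.mk_ord_toType _).symm)

variable (U) in
noncomputable def eFs : Finset U ≃ (#(Finset U)).ord.ToType :=
  Classical.choice (Cardinal.eq.1 (Cardinal.mk_ord_toType _).symm)

/-- The function whose values the task `x` is about. -/
noncomputable def taskFun (x : TT U) : Finset U → Set U := (eFn U).symm (ofLex x).1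

/-- `some c` = decide the value at `c`; `none` = add a multiplicative refinement. -/
def taskIdx (x : TT U) : Option ((#(Finset U)).ord.ToType) :=
  (ofLex x).2

variable (σ F)

/-- The goal accomplished at task `x` (state `E` before, `E\''` after). -/
def goalAt (x : TT U) (E E' : Set (Set U)) : Prop :=
  (taskIdx x).elim
    (((∀ a b : Finset U, a ⊆ b → taskFun x b ⊆ taskFun x a) ∧ ∀ s, taskFun x s ∈ E) →
      ∃ g : Finset U → Set U, (∀ s, g s ∈ E') ∧ (∀ s, g s ⊆ taskFun x s) ∧
        ∀ a b, g a ∩ g b ⊆ g (a ∪ b))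
    (fun c => taskFun x ((eFs U).symm c) ∈ E' ∨ (taskFun x ((eFs U).symm c))ᶜ ∈ E')

/-- Specification of the step at task `x`. -/
def BigSpec (x : TT U) (S S' : Set (Set U) × Set (Set U)) : Prop :=
  S.1 ⊆ S'.1 ∧ S.2 ⊆ S'.2 ∧ Indep σ F S'.1 S'.2 ∧
    (∃ W : Finset (Set U), S'.2 ⊆ S.2 ∪ ↑W) ∧ goalAt x S.1 S'.1

open scoped Classical in
noncomputable def stepFn (x : TT U) (S : Set (Set U) × Set (Set U)) :
    Set (Set U) × Set (Set U) :=
  if h : ∃ S', BigSpec σ F x S S' then h.choose else S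

noncomputable def stateAt : TT U → Set (Set U) × Set (Set U) :=
  (wellFounded_lt (α := TT U)).fix
    (fun x rec => stepFn σ F x
      (⋃ y, ⋃ _h : y < x, (rec y _h).1, ⋃ y, ⋃ _h : y < x, (rec y _h).2))

noncomputable def accumE (x : TT U) : Set (Set U) := ⋃ y, ⋃ _ : y < x, (stateAt σ F y).1
noncomputable def accumK (x : TT U) : Set (Set U) := ⋃ y, ⋃ _ : y < x, (stateAt σ F y).2

theorem stateAt_eq (x : TT U) :
    stateAt σ F x = stepFn σ F x (accumE σ F x, accumK σ F x) := by
  rw [stateAt, WellFounded.fix_eq]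
  rfl

theorem subset_stepFn (x : TT U) (S : Set (Set U) × Set (Set U)) :
    S.1 ⊆ (stepFn σ F x S).1 ∧ S.2 ⊆ (stepFn σ F x S).2 := by
  rw [stepFn]
  split
  · next h => exact ⟨h.choose_spec.1, h.choose_spec.2.1⟩
  · exact ⟨subset_rfl, subset_rfl⟩

theorem accumE_subset (x : TT U) : accumE σ F x ⊆ (stateAt σ F x).1 := by
  rw [stateAt_eq]
  exact (subset_stepFn σ F x (accumE σ F x, accumK σ F x)).1

theorem accumK_subset (x : TT U) : accumK σ F x ⊆ (stateAt σ F x).2 := by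
  rw [stateAt_eq]
  exact (subset_stepFn σ F x (accumE σ F x, accumK σ F x)).2

theorem stateAt_mono_E {y x : TT U} (h : y < x) :
    (stateAt σ F y).1 ⊆ accumE σ F x := by
  intro X hX
  exact Set.mem_iUnion.2 ⟨y, Set.mem_iUnion.2 ⟨h, hX⟩⟩

theorem stateAt_mono_K {y x : TT U} (h : y < x) :
    (stateAt σ F y).2 ⊆ accumK σ F x := by
  intro X hX
  exact Set.mem_iUnion.2 ⟨y, Set.mem_iUnion.2 ⟨h, hX⟩⟩

theorem stateAt_le_E {y x : TT U} (h : y ≤ x) :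
    (stateAt σ F y).1 ⊆ (stateAt σ F x).1 := by
  rcases eq_or_lt_of_le h with rfl | h
  · exact subset_rfl
  · exact (stateAt_mono_E σ F h).trans (accumE_subset σ F x)

/-- A finite nonempty subset of `accumE x` is contained in a single earlier stage. -/
theorem exists_stage {x : TT U} (G : Finset (Set U)) (hG : ↑G ⊆ accumE σ F x)
    (hne : G.Nonempty) : ∃ y, y < x ∧ ↑G ⊆ (stateAt σ F y).1 := by
  classical
  induction hne using Finset.Nonempty.cons_induction with
  | singleton X =>
      have hX := hG (Finset.mem_coe.2 (Finset.mem_singleton_self X))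
      obtain ⟨y, hy⟩ := Set.mem_iUnion.1 hX
      obtain ⟨hyx, hXy⟩ := Set.mem_iUnion.1 hy
      exact ⟨y, hyx, by simpa using hXy⟩
  | cons X G hXG hne IH =>
      have hG' : ↑G ⊆ accumE σ F x := by
        intro Z hZ
        exact hG (by simp [hZ])
      obtain ⟨y₁, hy₁, hGy₁⟩ := IH hG'
      have hX := hG (Finset.mem_coe.2 (Finset.mem_cons_self X G))
      obtain ⟨y₂, hy₂⟩ := Set.mem_iUnion.1 hX
      obtain ⟨hy₂x, hXy₂⟩ := Set.mem_iUnion.1 hy₂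
      rcases le_total y₁ y₂ with hle | hle
      · refine ⟨y₂, hy₂x, ?_⟩
        intro Z hZ
        rcases Finset.mem_cons.1 (Finset.mem_coe.1 hZ) with rfl | hZ'
        · exact hXy₂
        · exact stateAt_le_E σ F hle (hGy₁ hZ')
      · refine ⟨y₁, hy₁, ?_⟩
        intro Z hZ
        rcases Finset.mem_cons.1 (Finset.mem_coe.1 hZ) with rfl | hZ'
        · exact stateAt_le_E σ F hle hXy₂
        · exact hGy₁ hZ'


theorem mk_fn (U : Type u) [Infinite U] : #(Finset U → Set U) = #(Set U) := by
  rw [← Cardinal.power_def (Set U) (Finset U), Cardinal.mk_set,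
    Cardinal.mk_finset_of_infinite, ← Cardinal.power_mul,
    Cardinal.mul_eq_self (Cardinal.aleph0_le_mk U)]

theorem aleph0_lt_mk_set (U : Type u) [Infinite U] : ℵ₀ < #(Set U) := by
  refine lt_of_le_of_lt (Cardinal.aleph0_le_mk U) ?_
  rw [Cardinal.mk_set]
  exact Cardinal.cantor _

theorem mk_O2_le (U : Type u) [Infinite U] : #(O2 U) ≤ #U + 1 := by
  have hsurj : Function.Surjective
      (fun o : Option ((#(Finset U)).ord.ToType) => (o.elim ⊤ (fun b => (b : O2 U)) : O2 U)) := by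
    intro w
    induction w using WithTop.recTopCoe with
    | top => exact ⟨none, rfl⟩
    | coe b => exact ⟨some b, rfl⟩
  refine le_trans (Cardinal.mk_le_of_surjective hsurj) ?_
  rw [Cardinal.mk_option, Cardinal.mk_ord_toType, Cardinal.mk_finset_of_infinite]

theorem seg_small [Infinite U] (x : TT U) : #{y : TT U | y ≤ x} < #(Set U) := by
  classical
  set a : O1 U := (ofLex x).1 with ha
  have hinj : Function.Injective (fun y : {y : TT U // y ≤ x} =>
      ((⟨(ofLex y.1).1, by
        rcases (Prod.Lex.le_iff).1 y.2 with h | h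
        · exact le_of_lt h
        · exact le_of_eq h.1⟩ : {z : O1 U // z ≤ a}), (ofLex y.1).2)) := by
    intro y y' h
    have h1 : (ofLex y.1).1 = (ofLex y'.1).1 := congrArg (fun p => p.1.1) h
    have h2 : (ofLex y.1).2 = (ofLex y'.1).2 := congrArg (fun p => p.2) h
    apply Subtype.ext
    have : ofLex y.1 = ofLex y'.1 := Prod.ext h1 h2
    exact ofLex.injective this
  refine lt_of_le_of_lt (le_trans (Cardinal.mk_le_of_injective hinj) (Cardinal.mk_prod _ _).le) ?_
  rw [Cardinal.lift_id, Cardinal.lift_id]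
  have h1 : #{z : O1 U // z ≤ a} < #(Set U) := by
    have hsub : {z : O1 U | z ≤ a} ⊆ insert a (Set.Iio a) := by
      intro z hz
      have hz' : z ≤ a := hz
      rcases lt_or_eq_of_le hz' with h | h
      · exact Set.mem_insert_iff.2 (Or.inr h)
      · exact Set.mem_insert_iff.2 (Or.inl h)
    refine lt_of_le_of_lt (le_trans (Cardinal.mk_le_mk_of_subset hsub)
      (Cardinal.mk_insert_le)) ?_
    have h2 : #(Set.Iio a) < #(Set U) := by
      exact lt_of_lt_of_le (Cardinal.mk_Iio_ord_toType a) (le_of_eq (mk_fn U))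
    exact Cardinal.add_lt_of_lt (aleph0_lt_mk_set U).le h2
      (lt_trans Cardinal.one_lt_aleph0 (aleph0_lt_mk_set U))
  have h2 : #(O2 U) < #(Set U) := by
    refine lt_of_le_of_lt (mk_O2_le U) ?_
    refine Cardinal.add_lt_of_lt (aleph0_lt_mk_set U).le ?_
      (lt_trans Cardinal.one_lt_aleph0 (aleph0_lt_mk_set U))
    rw [Cardinal.mk_set]
    exact Cardinal.cantor _
  exact Cardinal.mul_lt_of_lt (aleph0_lt_mk_set U).le h1 h2

/-- The cardinal bound carried through the recursion. -/
noncomputable def nu (x : TT U) : Cardinal.{u} := #{y : TT U | y ≤ x} + ℵ₀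

theorem nu_inf (x : TT U) : ℵ₀ ≤ nu x := le_add_self

theorem nu_lt [Infinite U] (x : TT U) : nu x < #(Set U) :=
  Cardinal.add_lt_of_lt (aleph0_lt_mk_set U).le (seg_small x) (aleph0_lt_mk_set U)

theorem nu_mono {y x : TT U} (h : y ≤ x) : nu y ≤ nu x := by
  refine add_le_add_left (Cardinal.mk_le_mk_of_subset ?_) _
  intro z hz
  exact le_trans hz h

theorem nu_add_aleph0 (x : TT U) : nu x + ℵ₀ = nu x := by
  rw [nu, add_assoc, Cardinal.aleph0_add_aleph0]

theorem bigSpec_exists (x : TT U) (S : Set (Set U) × Set (Set U))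
    (hI : Indep σ F S.1 S.2) (hK : S.2 ≠ Set.univ) :
    ∃ S', BigSpec σ F x S S' := by
  rcases htask : taskIdx x with _ | c
  · by_cases hyp : (∀ a b : Finset U, a ⊆ b → taskFun x b ⊆ taskFun x a) ∧
        ∀ s, taskFun x s ∈ S.1
    · obtain ⟨E', K', h1, h2, h3, h4, g, hg1, hg2, hg3⟩ :=
        handle_step hI hK (taskFun x) hyp.1 hyp.2
      refine ⟨(E', K'), h1, h2, h3, h4, ?_⟩
      simp only [goalAt, htask, Option.elim]
      exact fun _ => ⟨g, hg1, hg2, hg3⟩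
    · refine ⟨S, subset_rfl, subset_rfl, hI, ⟨∅, by simp⟩, ?_⟩
      simp only [goalAt, htask, Option.elim]
      exact fun h => absurd h hyp
  · obtain ⟨E', K', h1, h2, h3, h4, W, hW⟩ := decide_step hI (taskFun x ((eFs U).symm c))
    refine ⟨(E', K'), h1, h2, h3, ⟨W, hW⟩, ?_⟩
    simp only [goalAt, htask, Option.elim]
    exact h4

theorem invariant [Infinite U] (hF : IndepFam σ F) (x : TT U) :
    BigSpec σ F x (accumE σ F x, accumK σ F x) (stateAt σ F x) ∧
      #(stateAt σ F x).2 ≤ nu x := by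
  induction x using ((wellFounded_lt (α := TT U)).induction) with
  | _ x IH =>
  have hIndAcc : Indep σ F (accumE σ F x) (accumK σ F x) := by
    intro m G hG C hC t
    rcases G.eq_empty_or_nonempty with rfl | hne
    · obtain ⟨u, hu1, hu2⟩ := hF m C t
      exact ⟨u, hu1, by simp, hu2⟩
    · obtain ⟨y, hyx, hGy⟩ := exists_stage σ F G hG hne
      have hIy : Indep σ F (stateAt σ F y).1 (stateAt σ F y).2 := (IH y hyx).1.2.2.1
      exact hIy m G hGy C (fun A hA hAK => hC A hA (stateAt_mono_K σ F hyx hAK)) t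
  have hKcard : #(accumK σ F x) ≤ nu x := by
    have hsub : accumK σ F x ⊆ ⋃ y ∈ Set.Iio x, (stateAt σ F y).2 := by
      intro A hA
      obtain ⟨y, hy⟩ := Set.mem_iUnion.1 hA
      obtain ⟨hyx, hAy⟩ := Set.mem_iUnion.1 hy
      exact Set.mem_iUnion₂.2 ⟨y, hyx, hAy⟩
    refine le_trans (Cardinal.mk_le_mk_of_subset hsub) ?_
    refine le_trans (Cardinal.mk_biUnion_le _ _) ?_
    rcases isEmpty_or_nonempty (Set.Iio x) with he | hne
    · simp
    · have h1 : #(Set.Iio x) ≤ nu x :=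
        le_trans (Cardinal.mk_le_mk_of_subset Set.Iio_subset_Iic_self)
          (by rw [nu]; exact self_le_add_right _ _)
      have h2 : ⨆ y : Set.Iio x, #(stateAt σ F y.1).2 ≤ nu x := by
        refine ciSup_le' ?_
        intro y
        exact le_trans (IH y.1 y.2).2 (nu_mono (le_of_lt y.2))
      refine le_trans (mul_le_mul' h1 h2) ?_
      rw [Cardinal.mul_eq_self (nu_inf x)]
  have hKne : accumK σ F x ≠ Set.univ := by
    intro h
    rw [h, Cardinal.mk_univ] at hKcard
    exact lt_irrefl _ (lt_of_le_of_lt hKcard (nu_lt x))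
  have hex : ∃ S', BigSpec σ F x (accumE σ F x, accumK σ F x) S' :=
    bigSpec_exists σ F x _ hIndAcc hKne
  have hchoose : stateAt σ F x = hex.choose := by
    rw [stateAt_eq, stepFn, dif_pos hex]
  refine ⟨by rw [hchoose]; exact hex.choose_spec, ?_⟩
  obtain ⟨W, hW⟩ := hex.choose_spec.2.2.2.1
  rw [← hchoose] at hW
  have h1 : #(stateAt σ F x).2 ≤ #(accumK σ F x) + #(↑W : Set (Set U)) :=
    le_trans (Cardinal.mk_le_mk_of_subset hW) (Cardinal.mk_union_le _ _)
  have h2 : #(↑W : Set (Set U)) ≤ ℵ₀ := le_of_lt W.finite_toSet.lt_aleph0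
  refine le_trans h1 (le_trans (add_le_add hKcard h2) (le_of_eq (nu_add_aleph0 x)))


noncomputable def Efin : Set (Set U) := ⋃ x : TT U, (stateAt σ F x).1

theorem stateAt_subset_Efin (x : TT U) : (stateAt σ F x).1 ⊆ Efin σ F :=
  Set.subset_iUnion (fun x => (stateAt σ F x).1) x

theorem exists_stage_glob (G : Finset (Set U)) (hG : ↑G ⊆ Efin σ F)
    (hne : G.Nonempty) : ∃ y, ↑G ⊆ (stateAt σ F y).1 := by
  classical
  induction hne using Finset.Nonempty.cons_induction with
  | singleton X =>
      have hX := hG (Finset.mem_coe.2 (Finset.mem_singleton_self X))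
      obtain ⟨y, hXy⟩ := Set.mem_iUnion.1 hX
      exact ⟨y, by simpa using hXy⟩
  | cons X G hXG hne IH =>
      have hG' : ↑G ⊆ Efin σ F := by
        intro Z hZ
        exact hG (by simp [hZ])
      obtain ⟨y₁, hGy₁⟩ := IH hG'
      have hX := hG (Finset.mem_coe.2 (Finset.mem_cons_self X G))
      obtain ⟨y₂, hXy₂⟩ := Set.mem_iUnion.1 hX
      rcases le_total y₁ y₂ with hle | hle
      · refine ⟨y₂, ?_⟩
        intro Z hZ
        rcases Finset.mem_cons.1 (Finset.mem_coe.1 hZ) with rfl | hZ'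
        · exact hXy₂
        · exact stateAt_le_E σ F hle (hGy₁ hZ')
      · refine ⟨y₁, ?_⟩
        intro Z hZ
        rcases Finset.mem_cons.1 (Finset.mem_coe.1 hZ) with rfl | hZ'
        · exact stateAt_le_E σ F hle hXy₂
        · exact hGy₁ hZ'

theorem fip [Infinite U] (hF : IndepFam σ F) (m : ℕ) (G : Finset (Set U))
    (hG : ↑G ⊆ Efin σ F) : ∃ u, m ≤ σ u ∧ ∀ X ∈ G, u ∈ X := by
  rcases G.eq_empty_or_nonempty with rfl | hne
  · obtain ⟨u, hu1, _⟩ := hF m ∅ (fun _ => ∅)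
    exact ⟨u, hu1, by simp⟩
  · obtain ⟨y, hGy⟩ := exists_stage_glob σ F G hG hne
    have hIy : Indep σ F (stateAt σ F y).1 (stateAt σ F y).2 :=
      (invariant σ F hF y).1.2.2.1
    obtain ⟨u, hu1, hu2, _⟩ := hIy m G hGy ∅ (by simp) (fun _ => ∅)
    exact ⟨u, hu1, hu2⟩

/-- The filter generated by the construction. -/
noncomputable def goodFilter : Filter U := Filter.generate (Efin σ F)

theorem not_both [Infinite U] (hF : IndepFam σ F) {A : Set U}
    (h1 : A ∈ goodFilter σ F) (h2 : Aᶜ ∈ goodFilter σ F) : False := by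
  classical
  obtain ⟨t1, ht1, hfin1, hsub1⟩ := Filter.mem_generate_iff.1 h1
  obtain ⟨t2, ht2, hfin2, hsub2⟩ := Filter.mem_generate_iff.1 h2
  obtain ⟨u, _, hu⟩ := fip σ F hF 0 (hfin1.toFinset ∪ hfin2.toFinset)
    (by
      intro X hX
      rcases Finset.mem_union.1 (Finset.mem_coe.1 hX) with hX' | hX'
      · exact ht1 (hfin1.mem_toFinset.1 hX')
      · exact ht2 (hfin2.mem_toFinset.1 hX'))
  have huA : u ∈ A := hsub1 (Set.mem_sInter.2 fun X hX =>
    hu X (Finset.mem_union_left _ (hfin1.mem_toFinset.2 hX)))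
  have huA' : u ∈ Aᶜ := hsub2 (Set.mem_sInter.2 fun X hX =>
    hu X (Finset.mem_union_right _ (hfin2.mem_toFinset.2 hX)))
  exact huA' huA

theorem mem_goodFilter_of_mem {A : Set U} (hA : A ∈ Efin σ F) : A ∈ goodFilter σ F :=
  Filter.mem_generate_iff.2 ⟨{A}, by simpa using hA, Set.finite_singleton A, by simp⟩

theorem decided [Infinite U] (hF : IndepFam σ F) (A : Set U) :
    A ∈ Efin σ F ∨ Aᶜ ∈ Efin σ F := by
  classical
  set x : TT U := toLex (eFn U (fun _ => A), (some (eFs U ∅) : O2 U)) with hx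
  have hgoal := (invariant σ F hF x).1.2.2.2.2
  have htask : taskIdx x = some (eFs U ∅) := rfl
  have htf : taskFun x = fun _ => A := by
    rw [taskFun, hx]
    exact (eFn U).symm_apply_apply _
  rw [goalAt, htask] at hgoal
  simp only [Option.elim, htf] at hgoal
  rcases hgoal with h | h
  · exact Or.inl (stateAt_subset_Efin σ F x h)
  · exact Or.inr (stateAt_subset_Efin σ F x h)

/-- The good ultrafilter. -/
noncomputable def goodUF [Infinite U] (hF : IndepFam σ F) : Ultrafilter U :=
  Ultrafilter.ofComplNotMemIff (goodFilter σ F)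
    (by
      intro s
      constructor
      · intro hs
        rcases decided σ F hF s with h | h
        · exact mem_goodFilter_of_mem σ F h
        · exact absurd (mem_goodFilter_of_mem σ F h) hs
      · intro hs hs'
        exact not_both σ F hF hs hs')

theorem mem_goodUF [Infinite U] (hF : IndepFam σ F) {A : Set U} :
    A ∈ goodUF σ F hF ↔ A ∈ goodFilter σ F := Iff.rfl

theorem sigma_large [Infinite U] (hF : IndepFam σ F) (n : ℕ) :
    {u : U | n ≤ σ u} ∈ goodUF σ F hF := by
  rw [← Ultrafilter.compl_notMem_iff]
  intro hc
  obtain ⟨t, ht, hfin, hsub⟩ := Filter.mem_generate_iff.1 hc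
  obtain ⟨u, hu1, hu2⟩ := fip σ F hF n hfin.toFinset
    (by
      intro X hX
      exact ht (hfin.mem_toFinset.1 (Finset.mem_coe.1 hX)))
  have : u ∈ {u : U | n ≤ σ u}ᶜ := hsub (Set.mem_sInter.2 fun X hX =>
    hu2 X (hfin.mem_toFinset.2 hX))
  exact this hu1

theorem goodUF_good [Infinite U] (hF : IndepFam σ F) (h : Finset U → Set U)
    (hmono : ∀ a b : Finset U, a ⊆ b → h b ⊆ h a)
    (hall : ∀ s, h s ∈ goodUF σ F hF) :
    ∃ g : Finset U → Set U, (∀ s, g s ∈ goodUF σ F hF) ∧ (∀ s, g s ⊆ h s) ∧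
      ∀ a b : Finset U, g a ∩ g b ⊆ g (a ∪ b) := by
  classical
  set xinf : TT U := toLex (eFn U h, (⊤ : O2 U)) with hxinf
  have htfinf : taskFun xinf = h := by
    rw [taskFun, hxinf]
    exact (eFn U).symm_apply_apply _
  -- each h s is in the accumulated generators at stage xinf
  have hmem : ∀ s : Finset U, h s ∈ accumE σ F xinf := by
    intro s
    set xs : TT U := toLex (eFn U h, (some (eFs U s) : O2 U)) with hxs
    have htask : taskIdx xs = some (eFs U s) := rfl
    have htf : taskFun xs = h := by
      rw [taskFun, hxs]
      exact (eFn U).symm_apply_apply _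
    have hgoal := (invariant σ F hF xs).1.2.2.2.2
    rw [goalAt, htask] at hgoal
    simp only [Option.elim, htf, Equiv.symm_apply_apply] at hgoal
    have hlt : xs < xinf := by
      refine (Prod.Lex.lt_iff).2 (Or.inr ⟨rfl, ?_⟩)
      exact WithTop.coe_lt_top _
    rcases hgoal with hg | hg
    · exact stateAt_mono_E σ F hlt hg
    · exfalso
      refine not_both σ F hF (hall s) ?_
      exact mem_goodFilter_of_mem σ F (stateAt_subset_Efin σ F xs hg)
  have hgoal := (invariant σ F hF xinf).1.2.2.2.2
  have htask : taskIdx xinf = none := rfl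
  rw [goalAt, htask] at hgoal
  simp only [Option.elim, htfinf] at hgoal
  obtain ⟨g, hg1, hg2, hg3⟩ := hgoal ⟨hmono, hmem⟩
  refine ⟨g, ?_, hg2, hg3⟩
  intro s
  exact mem_goodFilter_of_mem σ F (stateAt_subset_Efin σ F xinf (hg1 s))

end Rec

/-- Existence of a countably incomplete, `good` ultrafilter on any infinite set. -/
theorem exists_good_ultrafilter (U : Type u) [Infinite U] [DecidableEq U] :
    ∃ 𝒰 : Ultrafilter U, ∃ σ : U → ℕ,
      (∀ n : ℕ, {u : U | n ≤ σ u} ∈ 𝒰) ∧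
      ∀ h : Finset U → Set U, (∀ a b : Finset U, a ⊆ b → h b ⊆ h a) →
        (∀ s, h s ∈ 𝒰) →
        ∃ g : Finset U → Set U, (∀ s, g s ∈ 𝒰) ∧ (∀ s, g s ⊆ h s) ∧
          ∀ a b : Finset U, g a ∩ g b ⊆ g (a ∪ b) := by
  obtain ⟨σ, F, hF⟩ := exists_indepFam U
  exact ⟨goodUF σ F hF, σ, sigma_large σ F hF, goodUF_good σ F hF⟩


/-- Łoś-type lemma: evaluation of a multivariate polynomial over the ultrapower
is computed pointwise. -/
theorem los {U V J : Type u} [CommRing V] (𝒰 : Ultrafilter U) (xh : J → U → V)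
    (p : MvPolynomial J (U → V)) :
    MvPolynomial.eval (fun j => (↑(xh j) : Filter.Germ (𝒰 : Filter U) V))
      (MvPolynomial.map (Filter.Germ.coeRingHom (𝒰 : Filter U)) p)
    = (↑(fun u => MvPolynomial.eval₂ (Pi.evalRingHom (fun _ : U => V) u)
        (fun j => xh j u) p) : Filter.Germ (𝒰 : Filter U) V) := by
  rw [MvPolynomial.eval_map]
  have key : (MvPolynomial.eval₂Hom (Filter.Germ.coeRingHom (𝒰 : Filter U))
        (fun j => (↑(xh j) : Filter.Germ (𝒰 : Filter U) V)))
      = (Filter.Germ.coeRingHom (𝒰 : Filter U)).comp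
          (RingHom.pi (fun u => MvPolynomial.eval₂Hom
            (Pi.evalRingHom (fun _ : U => V) u) (fun j => xh j u))) := by
    apply MvPolynomial.ringHom_ext
    · intro r
      simp only [MvPolynomial.eval₂Hom_C, RingHom.comp_apply, Pi.ringHom_apply]
      refine congrArg _ ?_
      funext u
      simp
    · intro j
      simp only [MvPolynomial.eval₂Hom_X', RingHom.comp_apply, Pi.ringHom_apply]
      refine congrArg _ ?_
      funext u
      simp
  have := congrArg (fun φ : MvPolynomial J (U → V) →+* Filter.Germ (𝒰 : Filter U) V => φ p) key
  exact this

theorem coeRingHom_surjective {U V : Type u} [CommRing V] (𝒰 : Ultrafilter U) :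
    Function.Surjective (Filter.Germ.coeRingHom (𝒰 : Filter U) : (U → V) → _) := by
  intro z
  induction z using Filter.Germ.inductionOn with
  | h f => exact ⟨f, rfl⟩

theorem germ_coe_eq_zero {U V : Type u} [CommRing V] (𝒰 : Ultrafilter U) (f : U → V) :
    (↑f : Filter.Germ (𝒰 : Filter U) V) = 0 ↔ {u | f u = 0} ∈ 𝒰 := by
  rw [show (0 : Filter.Germ (𝒰 : Filter U) V) = ((fun _ => (0 : V)) : U → V) from rfl,
    Filter.Germ.coe_eq]
  rfl


end GoodUF

end GoodUFSection

/-- For an infinite set `U` of cardinality `τ` there is an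
ultrafilter `𝒰` on `U` such that for every valuation ring `V`, a system of
polynomial equations `(g i)_{i ∈ I}` with `card I ≤ τ`, in variables indexed
by `J`, with coefficients in `Ṽ = Π_𝒰 V`, has a solution in `Ṽ` iff every
finite subsystem has one. -/

theorem stmt_1 (U : Type u) [Infinite U] (τ : Cardinal.{u}) (hτ : Cardinal.mk U = τ) :
    ∃ 𝒰 : Ultrafilter U,
      ∀ (V : Type u) [CommRing V] [IsDomain V] [ValuationRing V]
        (I J : Type u) (g : I → MvPolynomial J (Ultrapower U 𝒰 V)),
        Cardinal.mk I ≤ τ →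
        ((∃ x : J → Ultrapower U 𝒰 V, ∀ i : I, MvPolynomial.eval x (g i) = 0) ↔
          ∀ s : Finset I, ∃ x : J → Ultrapower U 𝒰 V,
            ∀ i ∈ s, MvPolynomial.eval x (g i) = 0) := by
  classical
  obtain ⟨𝒰, σ, hσ, hgood⟩ := GoodUF.exists_good_ultrafilter U
  refine ⟨𝒰, ?_⟩
  intro V _ _ _ I J g hcard
  constructor
  · rintro ⟨x, hx⟩ s
    exact ⟨x, fun i _ => hx i⟩
  · intro hfin
    -- an injection of the index set into `U`
    rw [← hτ] at hcard
    obtain ⟨ι⟩ : Nonempty (I ↪ U) := Cardinal.le_def I U |>.1 hcard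
    -- lift the coefficients of the polynomials to functions
    have hmap : ∀ i, ∃ G : MvPolynomial J (U → V),
        MvPolynomial.map (Filter.Germ.coeRingHom (𝒰 : Filter U)) G = g i :=
      fun i => MvPolynomial.map_surjective _ (GoodUF.coeRingHom_surjective 𝒰) (g i)
    choose G hG using hmap
    -- the monotone family of "local solvability with large σ" sets
    set hset : Finset U → Set U := fun t =>
      {u | t.card ≤ σ u ∧ ∃ y : J → V, ∀ i : I, ι i ∈ t →
        MvPolynomial.eval₂ (Pi.evalRingHom (fun _ : U => V) u) y (G i) = 0} with hhset
    have hmono : ∀ a b : Finset U, a ⊆ b → hset b ⊆ hset a := by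
      intro a b hab u hu
      refine ⟨le_trans (Finset.card_le_card hab) hu.1, ?_⟩
      obtain ⟨y, hy⟩ := hu.2
      exact ⟨y, fun i hit => hy i (hab hit)⟩
    have hmem : ∀ t, hset t ∈ 𝒰 := by
      intro t
      set s : Finset I := t.preimage ι (Set.injOn_of_injective ι.injective) with hs
      obtain ⟨x, hx⟩ := hfin s
      choose xh hxh using fun j => GoodUF.coeRingHom_surjective 𝒰 (x j)
      have hZ : ∀ i ∈ s, {u | MvPolynomial.eval₂ (Pi.evalRingHom (fun _ : U => V) u)
          (fun j => xh j u) (G i) = 0} ∈ 𝒰 := by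
        intro i hi
        have hx0 : MvPolynomial.eval (fun j => (↑(xh j) : Filter.Germ (𝒰 : Filter U) V))
            (MvPolynomial.map (Filter.Germ.coeRingHom (𝒰 : Filter U)) (G i)) = 0 := by
          have hfun : (fun j => (↑(xh j) : Filter.Germ (𝒰 : Filter U) V)) = x := by
            funext j
            exact hxh j
          rw [hfun, hG i]
          exact hx i hi
        rw [GoodUF.los] at hx0
        exact (GoodUF.germ_coe_eq_zero 𝒰 _).1 hx0
      have hbig : ({u | t.card ≤ σ u} ∩ ⋂ i ∈ s, {u | MvPolynomial.eval₂
          (Pi.evalRingHom (fun _ : U => V) u) (fun j => xh j u) (G i) = 0}) ∈ 𝒰 := by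
        refine Filter.inter_mem (hσ t.card) ?_
        exact (Filter.biInter_finset_mem s).2 hZ
      refine Filter.mem_of_superset hbig ?_
      rintro u ⟨hu1, hu2⟩
      refine ⟨hu1, fun j => xh j u, ?_⟩
      intro i hit
      have his : i ∈ s := Finset.mem_preimage.2 hit
      have := Set.mem_iInter₂.1 hu2 i his
      exact this
    obtain ⟨g', hg1, hg2, hg3⟩ := hgood hset hmono hmem
    -- the union property of g'
    have hcap : ∀ (t : Finset I) (u : U), (∀ i ∈ t, u ∈ g' {ι i}) → t.Nonempty →
        u ∈ g' (t.image ι) := by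
      intro t u hmem2 hne
      induction hne using Finset.Nonempty.cons_induction with
      | singleton i =>
          have := hmem2 i (Finset.mem_singleton_self i)
          simpa [Finset.image_singleton] using this
      | cons i t hit hne IH =>
          have h1 : u ∈ g' {ι i} := hmem2 i (Finset.mem_cons_self i t)
          have h2 : u ∈ g' (t.image ι) :=
            IH (fun i' hi' => hmem2 i' (Finset.mem_cons.2 (Or.inr hi')))
          have h3 := hg3 {ι i} (t.image ι) ⟨h1, h2⟩
          have himg : {ι i} ∪ t.image ι = (Finset.cons i t hit).image ι := by
            rw [Finset.cons_eq_insert, Finset.image_insert]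
            exact (Finset.insert_eq _ _).symm
          rwa [himg] at h3
    -- the set of relevant equations at u is finite
    set su : U → Set I := fun u => {i | u ∈ g' {ι i}} with hsu
    have hsu_fin : ∀ u, (su u).Finite := by
      intro u
      by_contra hinf
      have hinf' : (su u).Infinite := hinf
      obtain ⟨t, hts, htcard⟩ := hinf'.exists_subset_card_eq (σ u + 1)
      have hne : t.Nonempty := Finset.card_pos.1 (by rw [htcard]; exact Nat.succ_pos _)
      have humem : u ∈ g' (t.image ι) := hcap t u (fun i hi => hts hi) hne
      have hle := (hg2 _ humem).1
      rw [Finset.card_image_of_injective _ ι.injective, htcard] at hle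
      omega
    -- the local solutions
    set yu : U → J → V := fun u =>
      if hy : ∃ y : J → V, ∀ i : I, i ∈ su u →
          MvPolynomial.eval₂ (Pi.evalRingHom (fun _ : U => V) u) y (G i) = 0
      then hy.choose else fun _ => 0 with hyu
    have hyok : ∀ u, ∀ i, i ∈ su u →
        MvPolynomial.eval₂ (Pi.evalRingHom (fun _ : U => V) u) (yu u) (G i) = 0 := by
      intro u i hi
      have hex : ∃ y : J → V, ∀ i' : I, i' ∈ su u →
          MvPolynomial.eval₂ (Pi.evalRingHom (fun _ : U => V) u) y (G i') = 0 := by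
        set tu : Finset I := (hsu_fin u).toFinset with htu
        have hne : tu.Nonempty := ⟨i, (hsu_fin u).mem_toFinset.2 hi⟩
        have humem : u ∈ g' (tu.image ι) :=
          hcap tu u (fun i' hi' => (hsu_fin u).mem_toFinset.1 hi') hne
        obtain ⟨-, y, hy⟩ := hg2 _ humem
        refine ⟨y, fun i' hi' => ?_⟩
        exact hy i' (Finset.mem_image.2 ⟨i', (hsu_fin u).mem_toFinset.2 hi', rfl⟩)
      rw [hyu]
      simp only [dif_pos hex]
      exact hex.choose_spec i hi
    -- the global solution
    refine ⟨fun j => (↑(fun u => yu u j) : Filter.Germ (𝒰 : Filter U) V), ?_⟩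
    intro i
    rw [← hG i]
    rw [GoodUF.los 𝒰 (fun j u => yu u j) (G i)]
    rw [GoodUF.germ_coe_eq_zero]
    refine Filter.mem_of_superset (hg1 {ι i}) ?_
    intro u hu
    have hisu : i ∈ su u := hu
    have := hyok u i hisu
    exact this
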